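/- Define L(x) = x - 1 - log x for x > 0. Let φ : ℝ → ℝ be differentiable on (0,∞) with 0 < v·φ'(v) ≤ φ(v) for every v > 0, and let v, v* > 0. Then L(φ(v)/φ(v*)) ≤ L(v/v*). -/
import Mathlib


/-- With `L x = x - 1 - log x`, if `φ` is differentiable on `(0,∞)` and satisfies
`0 < v φ'(v) ≤ φ v` for all `v > 0`, then `L(φ v / φ v*) ≤ L(v / v*)` for all
`v, v* > 0`. -/
theorem stmt_13 (φ : ℝ → ℝ)
    (hdiff : ∀ v ∈ Set.Ioi (0:ℝ), DifferentiableAt ℝ φ v)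
    (hinc : ∀ v : ℝ, 0 < v → 0 < v * deriv φ v ∧ v * deriv φ v ≤ φ v)
    (v vstar : ℝ) (hv : 0 < v) (hvstar : 0 < vstar) :
    φ v / φ vstar - 1 - Real.log (φ v / φ vstar) ≤ v / vstar - 1 - Real.log (v / vstar) := by
  have hφpos : ∀ t : ℝ, 0 < t → 0 < φ t := fun t ht =>
    lt_of_lt_of_le (hinc t ht).1 (hinc t ht).2
  set g : ℝ → ℝ := fun t => Real.log (φ t) - Real.log t with hg
  have hgderiv : ∀ t ∈ Set.Ioi (0:ℝ), HasDerivAt g (deriv φ t / φ t - t⁻¹) t := by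
    intro t ht
    have ht' : (0:ℝ) < t := ht
    exact ((hdiff t ht).hasDerivAt.log (ne_of_gt (hφpos t ht'))).sub
      (Real.hasDerivAt_log (ne_of_gt ht'))
  have hganti : AntitoneOn g (Set.Ioi 0) := by
    apply antitoneOn_of_deriv_nonpos (convex_Ioi 0)
    · intro t ht
      exact (hgderiv t ht).continuousAt.continuousWithinAt
    · rw [interior_Ioi]
      intro t ht
      exact (hgderiv t ht).differentiableAt.differentiableWithinAt
    · rw [interior_Ioi]
      intro t ht
      rw [(hgderiv t ht).deriv]
      have ht' : (0:ℝ) < t := ht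
      have h1 := (hinc t ht').2
      have hφt := hφpos t ht'
      rw [sub_nonpos, div_le_iff₀ hφt]
      rw [inv_mul_eq_div, le_div_iff₀ ht']
      linarith
  have hφmono : MonotoneOn φ (Set.Ioi 0) := by
    apply monotoneOn_of_deriv_nonneg (convex_Ioi 0)
    · intro t ht
      exact (hdiff t ht).continuousAt.continuousWithinAt
    · rw [interior_Ioi]
      intro t ht
      exact (hdiff t ht).differentiableWithinAt
    · rw [interior_Ioi]
      intro t ht
      have ht' : (0:ℝ) < t := ht
      nlinarith [(hinc t ht').1]
  have hφv := hφpos v hv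
  have hφvs := hφpos vstar hvstar
  have hrpos : 0 < φ v / φ vstar := div_pos hφv hφvs
  have hspos : 0 < v / vstar := div_pos hv hvstar
  have hlogr : Real.log (φ v / φ vstar) = Real.log (φ v) - Real.log (φ vstar) :=
    Real.log_div (ne_of_gt hφv) (ne_of_gt hφvs)
  have hlogs : Real.log (v / vstar) = Real.log v - Real.log vstar :=
    Real.log_div (ne_of_gt hv) (ne_of_gt hvstar)
  set r := φ v / φ vstar
  set s := v / vstar
  rcases le_total vstar v with hle | hle
  · -- vstar ≤ v : 1 ≤ r ≤ s
    have hgv : g v ≤ g vstar := hganti (Set.mem_Ioi.2 hvstar) (Set.mem_Ioi.2 hv) hle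
    have hlogle : Real.log r ≤ Real.log s := by
      simp only [hg] at hgv
      rw [hlogr, hlogs]; linarith
    have hr1 : 1 ≤ r := by
      have := hφmono (Set.mem_Ioi.2 hvstar) (Set.mem_Ioi.2 hv) hle
      rw [le_div_iff₀ hφvs]; linarith
    have hrs : r ≤ s := (Real.log_le_log_iff hrpos hspos).1 hlogle
    have key : Real.log (s / r) ≤ s / r - 1 :=
      Real.log_le_sub_one_of_pos (div_pos hspos hrpos)
    rw [Real.log_div (ne_of_gt hspos) (ne_of_gt hrpos)] at key
    have h2 : s / r - 1 ≤ s - r := by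
      rw [div_sub_one (ne_of_gt hrpos), div_le_iff₀ hrpos]
      nlinarith
    linarith
  · -- v ≤ vstar : s ≤ r ≤ 1
    have hgv : g vstar ≤ g v := hganti (Set.mem_Ioi.2 hv) (Set.mem_Ioi.2 hvstar) hle
    have hlogle : Real.log s ≤ Real.log r := by
      simp only [hg] at hgv
      rw [hlogr, hlogs]; linarith
    have hr1 : r ≤ 1 := by
      have := hφmono (Set.mem_Ioi.2 hv) (Set.mem_Ioi.2 hvstar) hle
      rw [div_le_one hφvs]; linarith
    have hrs : s ≤ r := (Real.log_le_log_iff hspos hrpos).1 hlogle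
    have key : Real.log (s / r) ≤ s / r - 1 :=
      Real.log_le_sub_one_of_pos (div_pos hspos hrpos)
    rw [Real.log_div (ne_of_gt hspos) (ne_of_gt hrpos)] at key
    have hsr : s / r * r = s := div_mul_cancel₀ s (ne_of_gt hrpos)
    have h2 : r - s ≤ 1 - s / r := by nlinarith
    linarith
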